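/- Let d ∈ ℕ, w₁, …, w_d > 0, and let h₁, …, h_d : ℝ → ℝ be functions each of the form h_s(y) = (1/m_s) Σ_{j=1}^{m_s} (y − y_{s,j})_+ for finitely many reals y_{s,j}. Let y₁ = min and y_m = max of all the y_{s,j}. For i = 1, …, d define the min-max antitonic regression M̃_i(y) = min_{1 ≤ k ≤ i} max_{k ≤ j ≤ d} [ Σ_{s=k}^j w_s h_s(y) ] / [ Σ_{s=k}^j w_s ]. Then: (a) for each i, M̃_i is increasing in y and 1-Lipschitz, i.e. 0 ≤ M̃_i(y + t) − M̃_i(y) ≤ t for all y ∈ ℝ and t > 0; (b) for each fixed y, M̃_i(y) is decreasing in i; (c) M̃_i(y) = 0 for all y ≤ y₁; and (d) M̃_i(y_m + t) = M̃_i(y_m) + t for all t > 0. -/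

import Mathlib

open Finset

noncomputable def Rfun (d : ℕ) (w : Fin d → ℝ) (h : Fin d → ℝ → ℝ) (k j : Fin d) (y : ℝ) : ℝ :=
  (∑ s ∈ Finset.Icc k j, w s * h s y) / ∑ s ∈ Finset.Icc k j, w s

noncomputable def Gfun (d : ℕ) (w : Fin d → ℝ) (h : Fin d → ℝ → ℝ) (k : Fin d) (y : ℝ) : ℝ :=
  (Finset.Ici k).sup' Finset.nonempty_Ici fun j => Rfun d w h k j y

lemma sup'_add_const' {α : Type*} (s : Finset α) (hs : s.Nonempty) (f : α → ℝ) (t : ℝ) :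
    s.sup' hs (fun x => f x + t) = s.sup' hs f + t := by
  apply le_antisymm
  · exact Finset.sup'_le _ _ fun x hx => add_le_add_left (Finset.le_sup' f hx) t
  · have : s.sup' hs f ≤ s.sup' hs (fun x => f x + t) - t :=
      Finset.sup'_le _ _ fun x hx => le_sub_iff_add_le.mpr (Finset.le_sup' (fun x => f x + t) hx)
    linarith

lemma inf'_add_const' {α : Type*} (s : Finset α) (hs : s.Nonempty) (f : α → ℝ) (t : ℝ) :
    s.inf' hs (fun x => f x + t) = s.inf' hs f + t := by
  apply le_antisymm
  · have : s.inf' hs (fun x => f x + t) - t ≤ s.inf' hs f :=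
      Finset.le_inf' _ _ fun x hx => sub_le_iff_le_add.mpr (Finset.inf'_le (fun x => f x + t) hx)
    linarith
  · exact Finset.le_inf' _ _ fun x hx => add_le_add_left (Finset.inf'_le f hx) t


/-- Properties of the min-max antitonic regression of empirical stop-loss functions:
with positive weights `w s` and group stop-loss functions
`h s y = (1/m s) Σ_j (y - yv s j)₊`, the min-max antitonic regression
`M̃ i y = min_{k ≤ i} max_{j ≥ k} (Σ_{s=k}^j w s · h s y) / (Σ_{s=k}^j w s)` is
(a) increasing and 1-Lipschitz in `y`, (b) decreasing in `i`, (c) zero for `y ≤ y₁` (the minimum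
of all observations), and (d) satisfies `M̃ i (y_m + t) = M̃ i y_m + t` for `t > 0`, where `y_m`
is the maximum of all observations. -/
theorem minmax_antitonic_regression_properties
    (d : ℕ) [NeZero d] (w : Fin d → ℝ) (hw : ∀ s, 0 < w s)
    (m : Fin d → ℕ) (hm : ∀ s, 0 < m s)
    (yv : (s : Fin d) → Fin (m s) → ℝ)
    (h : Fin d → ℝ → ℝ)
    (hh : ∀ s y, h s y = (1 / (m s : ℝ)) * ∑ j, max (y - yv s j) 0)
    (y₁ ym : ℝ)
    (hy₁ : IsLeast {v | ∃ s j, v = yv s j} y₁)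
    (hym : IsGreatest {v | ∃ s j, v = yv s j} ym)
    (Mt : Fin d → ℝ → ℝ)
    (hMt : ∀ i y, Mt i y =
      (Finset.Iic i).inf' Finset.nonempty_Iic fun k =>
        (Finset.Ici k).sup' Finset.nonempty_Ici fun j =>
          (∑ s ∈ Finset.Icc k j, w s * h s y) / ∑ s ∈ Finset.Icc k j, w s) :
    (∀ i y t, 0 < t → 0 ≤ Mt i (y + t) - Mt i y ∧ Mt i (y + t) - Mt i y ≤ t) ∧
    (∀ y, Antitone fun i => Mt i y) ∧
    (∀ i y, y ≤ y₁ → Mt i y = 0) ∧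
    (∀ i t, 0 < t → Mt i (ym + t) = Mt i ym + t) := by
  have hMt2 : ∀ i y, Mt i y = (Finset.Iic i).inf' Finset.nonempty_Iic fun k => Gfun d w h k y := by
    intro i y; rw [hMt]; rfl
  have hup : ∀ (s : Fin d) (j : Fin (m s)), yv s j ≤ ym := fun s j => hym.2 ⟨s, j, rfl⟩
  have hlow : ∀ (s : Fin d) (j : Fin (m s)), y₁ ≤ yv s j := fun s j => hy₁.2 ⟨s, j, rfl⟩
  have hmpos : ∀ s : Fin d, (0:ℝ) < (m s : ℝ) := fun s => by exact_mod_cast hm s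
  -- h is monotone and 1-Lipschitz in steps
  have hstep : ∀ s y t, 0 < t → h s y ≤ h s (y + t) ∧ h s (y + t) ≤ h s y + t := by
    intro s y t ht
    have hne : (m s : ℝ) ≠ 0 := (hmpos s).ne'
    rw [hh, hh]
    constructor
    · apply mul_le_mul_of_nonneg_left _ (by positivity)
      exact Finset.sum_le_sum fun j _ => max_le_max (by linarith) le_rfl
    · have h1 : ∑ j, max (y + t - yv s j) 0 ≤ ∑ j, max (y - yv s j) 0 + (m s : ℝ) * t := by
        calc ∑ j, max (y + t - yv s j) 0 ≤ ∑ j : Fin (m s), (max (y - yv s j) 0 + t) := by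
              refine Finset.sum_le_sum fun j _ => ?_
              apply max_le
              · have := le_max_left (y - yv s j) (0:ℝ); linarith
              · positivity
          _ = ∑ j, max (y - yv s j) 0 + (m s : ℝ) * t := by
              rw [Finset.sum_add_distrib, Finset.sum_const, Finset.card_univ, Fintype.card_fin,
                nsmul_eq_mul]
      calc (1/(m s:ℝ)) * ∑ j, max (y + t - yv s j) 0
          ≤ (1/(m s:ℝ)) * (∑ j, max (y - yv s j) 0 + (m s:ℝ)*t) :=
            mul_le_mul_of_nonneg_left h1 (by positivity)
        _ = (1/(m s:ℝ)) * ∑ j, max (y - yv s j) 0 + t := by field_simp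
  have hzero : ∀ s y, y ≤ y₁ → h s y = 0 := by
    intro s y hy
    rw [hh]
    have : ∑ j, max (y - yv s j) 0 = 0 :=
      Finset.sum_eq_zero fun j _ => max_eq_right (by have := hlow s j; linarith)
    rw [this, mul_zero]
  have hshift : ∀ s t, 0 < t → h s (ym + t) = h s ym + t := by
    intro s t ht
    have hne : (m s : ℝ) ≠ 0 := (hmpos s).ne'
    rw [hh, hh]
    have h1 : ∑ j, max (ym + t - yv s j) 0 = ∑ j, max (ym - yv s j) 0 + (m s : ℝ) * t := by
      calc ∑ j, max (ym + t - yv s j) 0 = ∑ j : Fin (m s), (max (ym - yv s j) 0 + t) := by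
            refine Finset.sum_congr rfl fun j _ => ?_
            have h2 : 0 ≤ ym - yv s j := by have := hup s j; linarith
            rw [max_eq_left (by linarith), max_eq_left h2]; ring
        _ = ∑ j, max (ym - yv s j) 0 + (m s : ℝ) * t := by
            rw [Finset.sum_add_distrib, Finset.sum_const, Finset.card_univ, Fintype.card_fin,
              nsmul_eq_mul]
    rw [h1]; field_simp
  -- denominator positivity
  have hW : ∀ k j : Fin d, k ≤ j → 0 < ∑ s ∈ Finset.Icc k j, w s := fun k j hkj =>
    Finset.sum_pos (fun s _ => (hw s)) ⟨k, Finset.mem_Icc.mpr ⟨le_rfl, hkj⟩⟩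
  -- ratio lemmas
  have hRstep : ∀ (k j : Fin d), k ≤ j → ∀ y t, 0 < t →
      Rfun d w h k j y ≤ Rfun d w h k j (y + t) ∧
      Rfun d w h k j (y + t) ≤ Rfun d w h k j y + t := by
    intro k j hkj y t ht
    have hWp := hW k j hkj
    unfold Rfun
    constructor
    · apply (div_le_div_iff_of_pos_right hWp).mpr
      exact Finset.sum_le_sum fun s _ => mul_le_mul_of_nonneg_left (hstep s y t ht).1 (hw s).le
    · have h2 : ∑ s ∈ Finset.Icc k j, w s * h s (y + t)
          ≤ ∑ s ∈ Finset.Icc k j, w s * h s y + t * ∑ s ∈ Finset.Icc k j, w s := by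
        calc ∑ s ∈ Finset.Icc k j, w s * h s (y + t)
            ≤ ∑ s ∈ Finset.Icc k j, (w s * h s y + t * w s) := by
              refine Finset.sum_le_sum fun s _ => ?_
              have := (hstep s y t ht).2
              nlinarith [hw s]
          _ = _ := by rw [Finset.sum_add_distrib, ← Finset.mul_sum]
      calc (∑ s ∈ Finset.Icc k j, w s * h s (y + t)) / ∑ s ∈ Finset.Icc k j, w s
          ≤ (∑ s ∈ Finset.Icc k j, w s * h s y + t * ∑ s ∈ Finset.Icc k j, w s)
              / ∑ s ∈ Finset.Icc k j, w s := (div_le_div_iff_of_pos_right hWp).mpr h2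
        _ = (∑ s ∈ Finset.Icc k j, w s * h s y) / (∑ s ∈ Finset.Icc k j, w s) + t := by
            rw [add_div, mul_div_assoc, div_self hWp.ne', mul_one]
  have hRzero : ∀ (k j : Fin d) y, y ≤ y₁ → Rfun d w h k j y = 0 := by
    intro k j y hy
    unfold Rfun
    rw [Finset.sum_eq_zero fun s _ => by rw [hzero s y hy, mul_zero], zero_div]
  have hRshift : ∀ (k j : Fin d), k ≤ j → ∀ t, 0 < t →
      Rfun d w h k j (ym + t) = Rfun d w h k j ym + t := by
    intro k j hkj t ht
    have hWp := hW k j hkj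
    unfold Rfun
    have h2 : ∑ s ∈ Finset.Icc k j, w s * h s (ym + t)
        = ∑ s ∈ Finset.Icc k j, w s * h s ym + t * ∑ s ∈ Finset.Icc k j, w s := by
      calc ∑ s ∈ Finset.Icc k j, w s * h s (ym + t)
          = ∑ s ∈ Finset.Icc k j, (w s * h s ym + t * w s) := by
            refine Finset.sum_congr rfl fun s _ => ?_
            rw [hshift s t ht]; ring
        _ = _ := by rw [Finset.sum_add_distrib, ← Finset.mul_sum]
    rw [h2, add_div, mul_div_assoc, div_self hWp.ne', mul_one]
  -- G lemmas
  have hGstep : ∀ (k : Fin d) y t, 0 < t →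
      Gfun d w h k y ≤ Gfun d w h k (y + t) ∧ Gfun d w h k (y + t) ≤ Gfun d w h k y + t := by
    intro k y t ht
    unfold Gfun
    constructor
    · exact Finset.sup'_mono_fun fun j hj => (hRstep k j (Finset.mem_Ici.mp hj) y t ht).1
    · refine Finset.sup'_le _ _ fun j hj => ?_
      exact le_trans (hRstep k j (Finset.mem_Ici.mp hj) y t ht).2
        (add_le_add_left (Finset.le_sup' (fun j => Rfun d w h k j y) hj) t)
  refine ⟨?_, ?_, ?_, ?_⟩
  · -- (a)
    intro i y t ht
    rw [hMt2, hMt2]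
    have A : ((Finset.Iic i).inf' Finset.nonempty_Iic fun k => Gfun d w h k y)
        ≤ (Finset.Iic i).inf' Finset.nonempty_Iic fun k => Gfun d w h k (y + t) :=
      Finset.le_inf' _ _ fun k hk =>
        le_trans (Finset.inf'_le (fun k => Gfun d w h k y) hk) (hGstep k y t ht).1
    have B : ((Finset.Iic i).inf' Finset.nonempty_Iic fun k => Gfun d w h k (y + t))
        ≤ ((Finset.Iic i).inf' Finset.nonempty_Iic fun k => Gfun d w h k y) + t := by
      have B' : ((Finset.Iic i).inf' Finset.nonempty_Iic fun k => Gfun d w h k (y + t)) - t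
          ≤ (Finset.Iic i).inf' Finset.nonempty_Iic fun k => Gfun d w h k y := by
        refine Finset.le_inf' _ _ fun k hk => ?_
        have h1 := Finset.inf'_le (fun k => Gfun d w h k (y + t)) hk
        have h2 := (hGstep k y t ht).2
        linarith
      linarith
    exact ⟨by linarith, by linarith⟩
  · -- (b)
    intro y i i' hii'
    simp only
    rw [hMt2, hMt2]
    exact Finset.le_inf' _ _ fun k hk =>
      Finset.inf'_le _ (Finset.Iic_subset_Iic.mpr hii' hk)
  · -- (c)
    intro i y hy
    rw [hMt2]
    have hG0 : ∀ k : Fin d, Gfun d w h k y = 0 := by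
      intro k
      unfold Gfun
      apply le_antisymm
      · exact Finset.sup'_le _ _ fun j hj => (hRzero k j y hy).le
      · exact le_trans (hRzero k k y hy).ge
          (Finset.le_sup' (fun j => Rfun d w h k j y) (Finset.mem_Ici.mpr le_rfl))
    apply le_antisymm
    · exact le_trans (Finset.inf'_le _ (Finset.mem_Iic.mpr le_rfl)) (hG0 i).le
    · exact Finset.le_inf' _ _ fun k _ => (hG0 k).ge
  · -- (d)
    intro i t ht
    rw [hMt2, hMt2]
    have hGshift : ∀ k : Fin d, Gfun d w h k (ym + t) = Gfun d w h k ym + t := by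
      intro k
      unfold Gfun
      rw [Finset.sup'_congr Finset.nonempty_Ici rfl
        (fun j hj => hRshift k j (Finset.mem_Ici.mp hj) t ht)]
      exact sup'_add_const' _ _ _ t
    simp only [hGshift]
    exact inf'_add_const' _ _ _ t
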